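/- If M is a closed PCF_dp program and M is contextually congruent to a value V, then M evaluates to some value W (M ⇓ W) with V contextually congruent to W. -/

import Mathlib

/-!  A formalization of the meta-programming language PCF_dp (Davies–Pfenning style
quasi-quotation over call-by-value PCF), with small-step reduction, typing with a
modal context, contexts, contextual (pre)congruence, models, and a shallow
semantics for the program logic's formulae and judgements. -/

namespace PCFdp

/-- Types of PCF_dp: base types, functions, and code types `⟨α⟩`. -/
inductive Ty : Type
  | unit | bool | int
  | arrow (a b : Ty)
  | code (a : Ty)
deriving DecidableEq

/-- Terms of PCF_dp. `quote M` is the quasi-quote `⟨M⟩`, and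
`letq x M N` is `let ⟨x⟩ = M in N`. `fix g x α β M` is `μg.λx^α.M`. -/
inductive Tm : Type
  | var (x : ℕ)
  | cunit
  | cbool (b : Bool)
  | cint (n : ℤ)
  | lam (x : ℕ) (α : Ty) (M : Tm)
  | fix (g x : ℕ) (α β : Ty) (M : Tm)
  | app (M N : Tm)
  | add (M N : Tm)
  | ifte (M N N' : Tm)
  | quote (M : Tm)
  | letq (x : ℕ) (M N : Tm)
deriving DecidableEq

/-- Values: constants, abstractions, recursive abstractions, and all quasi-quotes. -/
inductive IsValue : Tm → Prop
  | cunit : IsValue .cunit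
  | cbool (b) : IsValue (.cbool b)
  | cint (n) : IsValue (.cint n)
  | lam (x α M) : IsValue (.lam x α M)
  | fix (g x α β M) : IsValue (.fix g x α β M)
  | quote (M) : IsValue (.quote M)

/-- Substitution `M[N/x]` (substituted terms are closed in all uses below). -/
def subst (x : ℕ) (N : Tm) : Tm → Tm
  | .var y => if y = x then N else .var y
  | .cunit => .cunit
  | .cbool b => .cbool b
  | .cint n => .cint n
  | .lam y α M => if y = x then .lam y α M else .lam y α (subst x N M)
  | .fix g y α β M => if g = x ∨ y = x then .fix g y α β M else .fix g y α β (subst x N M)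
  | .app M M' => .app (subst x N M) (subst x N M')
  | .add M M' => .add (subst x N M) (subst x N M')
  | .ifte M M₁ M₂ => .ifte (subst x N M) (subst x N M₁) (subst x N M₂)
  | .quote M => .quote (subst x N M)
  | .letq y M M' => .letq y (subst x N M) (if y = x then M' else subst x N M')

/-- Call-by-value small-step reduction, with the redexes of PCF plus
`let ⟨x⟩ = ⟨M⟩ in N → N[M/x]`, closed under evaluation contexts. -/
inductive Step : Tm → Tm → Prop
  | beta {x α M V} : IsValue V → Step (.app (.lam x α M) V) (subst x V M)
  | betaFix {g x α β M V} : IsValue V →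
      Step (.app (.fix g x α β M) V) (subst x V (subst g (.fix g x α β M) M))
  | iteT {N N'} : Step (.ifte (.cbool true) N N') N
  | iteF {N N'} : Step (.ifte (.cbool false) N N') N'
  | addC {m n} : Step (.add (.cint m) (.cint n)) (.cint (m + n))
  | letqQ {x M N} : Step (.letq x (.quote M) N) (subst x M N)
  | appL {M M' N} : Step M M' → Step (.app M N) (.app M' N)
  | appR {V N N'} : IsValue V → Step N N' → Step (.app V N) (.app V N')
  | addL {M M' N} : Step M M' → Step (.add M N) (.add M' N)
  | addR {V N N'} : IsValue V → Step N N' → Step (.add V N) (.add V N')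
  | ifteC {M M' N N'} : Step M M' → Step (.ifte M N N') (.ifte M' N N')
  | letqL {x M M' N} : Step M M' → Step (.letq x M N) (.letq x M' N)

/-- Many-step reduction `→*`. -/
def Steps : Tm → Tm → Prop := Relation.ReflTransGen Step

/-- `M ⇓ V`: evaluation to a value. -/
def Evals (M V : Tm) : Prop := Steps M V ∧ IsValue V

/-- `M ⇓`: convergence. -/
def Conv (M : Tm) : Prop := ∃ V, Evals M V

/-- `M ⇑`: divergence. -/
def Div (M : Tm) : Prop := ¬ Conv M

/-- Typing environments: partial maps from variables to types. -/
def Env : Type := ℕ → Option Ty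
def Env.empty : Env := fun _ => none
def Env.update (Γ : Env) (x : ℕ) (α : Ty) : Env := fun y => if y = x then some α else Γ y

/-- The typing judgement `Γ; Δ ⊢ M : α` with non-modal context `Γ` and modal
context `Δ`.  Free variables of quasi-quoted code must be modal; unquote binds
a modal variable. -/
inductive Types : Env → Env → Tm → Ty → Prop
  | varN {Γ Δ : Env} {x α} : Γ x = some α → Types Γ Δ (.var x) α
  | varM {Γ Δ : Env} {x α} : Δ x = some α → Types Γ Δ (.var x) α
  | cunit {Γ Δ} : Types Γ Δ .cunit .unit
  | cbool {Γ Δ b} : Types Γ Δ (.cbool b) .bool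
  | cint {Γ Δ n} : Types Γ Δ (.cint n) .int
  | lam {Γ Δ x α β M} : Types (Env.update Γ x α) Δ M β → Types Γ Δ (.lam x α M) (.arrow α β)
  | fix {Γ Δ g x α β M} :
      Types (Env.update (Env.update Γ g (.arrow α β)) x α) Δ M β →
      Types Γ Δ (.fix g x α β M) (.arrow α β)
  | app {Γ Δ M N α β} : Types Γ Δ M (.arrow α β) → Types Γ Δ N α → Types Γ Δ (.app M N) β
  | add {Γ Δ M N} : Types Γ Δ M .int → Types Γ Δ N .int → Types Γ Δ (.add M N) .int
  | ifte {Γ Δ M N N' α} : Types Γ Δ M .bool → Types Γ Δ N α → Types Γ Δ N' α →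
      Types Γ Δ (.ifte M N N') α
  | quote {Γ Δ M α} : Types Env.empty Δ M α → Types Γ Δ (.quote M) (.code α)
  | letq {Γ Δ x M N α β} : Types Γ Δ M (.code α) → Types Γ (Env.update Δ x α) N β →
      Types Γ Δ (.letq x M N) β

/-- `M` is a closed program of type `α`. -/
def Closed (M : Tm) (α : Ty) : Prop := Types Env.empty Env.empty M α

/-- Term contexts (terms with one hole). -/
inductive Ctx : Type
  | hole
  | lamC (x : ℕ) (α : Ty) (C : Ctx)
  | fixC (g x : ℕ) (α β : Ty) (C : Ctx)
  | appL (C : Ctx) (N : Tm)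
  | appR (M : Tm) (C : Ctx)
  | addL (C : Ctx) (N : Tm)
  | addR (M : Tm) (C : Ctx)
  | ifteC (C : Ctx) (N N' : Tm)
  | ifteL (M : Tm) (C : Ctx) (N' : Tm)
  | ifteR (M N : Tm) (C : Ctx)
  | quoteC (C : Ctx)
  | letqL (x : ℕ) (C : Ctx) (N : Tm)
  | letqR (x : ℕ) (M : Tm) (C : Ctx)

/-- Plugging a term into a context. -/
def Ctx.plug : Ctx → Tm → Tm
  | .hole, M => M
  | .lamC x α C, M => .lam x α (C.plug M)
  | .fixC g x α β C, M => .fix g x α β (C.plug M)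
  | .appL C N, M => .app (C.plug M) N
  | .appR L C, M => .app L (C.plug M)
  | .addL C N, M => .add (C.plug M) N
  | .addR L C, M => .add L (C.plug M)
  | .ifteC C N N', M => .ifte (C.plug M) N N'
  | .ifteL L C N', M => .ifte L (C.plug M) N'
  | .ifteR L N C, M => .ifte L N (C.plug M)
  | .quoteC C, M => .quote (C.plug M)
  | .letqL x C N, M => .letq x (C.plug M) N
  | .letqR x L C, M => .letq x L (C.plug M)

/-- Contextual precongruence `M ≲ N`: for every closing context `C` of type
`Unit` (for both terms), convergence of `C[M]` implies convergence of `C[N]`. -/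
def Prec (M N : Tm) : Prop :=
  ∀ C : Ctx, Closed (C.plug M) .unit → Closed (C.plug N) .unit →
    Conv (C.plug M) → Conv (C.plug N)

/-- Contextual congruence `M ≃ N`, i.e. `≲ ∩ ≲⁻¹`. -/
def Cong (M N : Tm) : Prop := Prec M N ∧ Prec N M

/-- Partial substitutions (used as the two components of a model). -/
def Sub : Type := ℕ → Option Tm
def Sub.remove (ρ : Sub) (x : ℕ) : Sub := fun y => if y = x then none else ρ y
def Sub.update (ρ : Sub) (x : ℕ) (M : Tm) : Sub := fun y => if y = x then some M else ρ y

/-- Simultaneous substitution of (closed) terms for free variables. -/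
def msubst (ρ : Sub) : Tm → Tm
  | .var x => (ρ x).getD (.var x)
  | .cunit => .cunit
  | .cbool b => .cbool b
  | .cint n => .cint n
  | .lam x α M => .lam x α (msubst (ρ.remove x) M)
  | .fix g x α β M => .fix g x α β (msubst ((ρ.remove g).remove x) M)
  | .app M N => .app (msubst ρ M) (msubst ρ N)
  | .add M N => .add (msubst ρ M) (msubst ρ N)
  | .ifte M N N' => .ifte (msubst ρ M) (msubst ρ N) (msubst ρ N')
  | .quote M => .quote (msubst ρ M)
  | .letq x M N => .letq x (msubst ρ M) (msubst (ρ.remove x) N)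

/-- A model of type `Γ; Δ`: `ξ` maps the non-modal variables to closed values of
the right types, `σ` maps the modal variables to closed (possibly diverging)
programs of the right types. -/
structure Model (Γ Δ : Env) : Type where
  ξ : Sub
  σ : Sub
  ξ_dom : ∀ x, (Γ x).isSome ↔ (ξ x).isSome
  ξ_typed : ∀ x α V, Γ x = some α → ξ x = some V → IsValue V ∧ Closed V α
  σ_dom : ∀ x, (Δ x).isSome ↔ (σ x).isSome
  σ_typed : ∀ x α M, Δ x = some α → σ x = some M → Closed M α

/-- The combined substitution `ξ ∪ σ` of a model. -/
def Model.sub {Γ Δ : Env} (η : Model Γ Δ) : Sub :=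
  fun x => match η.ξ x with | some V => some V | none => η.σ x

/-- The closure `Mη` of a term by a model. -/
def Model.close {Γ Δ : Env} (η : Model Γ Δ) (M : Tm) : Tm := msubst η.sub M

/-- Denotation of a variable in a model given as a pair of substitutions. -/
def lookup (ξ σ : Sub) (u : ℕ) : Option Tm :=
  match ξ u with | some V => some V | none => σ u

/-- Formulae of the logic, represented semantically by their satisfaction
predicate on models `(ξ, σ)`. -/
def Form : Type := Sub → Sub → Prop

/-- Semantics of the code-evaluation predicate `⟨u⟩↘m.A`: the denotation of `u`
evaluates to a quasi-quote `⟨M⟩`, `M ⇓ V`, and `A` holds with the modal anchor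
`m` bound to `V`. -/
def CodeEval (u m : ℕ) (A : Form) : Form := fun ξ σ =>
  ∃ U M V, lookup ξ σ u = some U ∧ Evals U (.quote M) ∧ Evals M V ∧ A ξ (σ.update m V)

/-- Validity of the total-correctness judgement `{A} M :_u {B}`
(anchor `u` non-modal). -/
def Valid (Γ Δ : Env) (A : Form) (M : Tm) (u : ℕ) (B : Form) : Prop :=
  ∀ η : Model Γ Δ, A η.ξ η.σ →
    ∃ V, Evals (η.close M) V ∧ B (η.ξ.update u V) η.σ

/-- Validity of a total-correctness judgement whose anchor is placed modally. -/
def ValidM (Γ Δ : Env) (A : Form) (M : Tm) (m : ℕ) (B : Form) : Prop :=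
  ∀ η : Model Γ Δ, A η.ξ η.σ →
    ∃ V, Evals (η.close M) V ∧ B η.ξ (η.σ.update m V)


/-! ### Auxiliary development -/

section Aux

open Relation

lemma env_update_eq (Γ : Env) (x : ℕ) (α : Ty) : Env.update Γ x α x = some α := by
  simp [Env.update]

lemma env_update_ne (Γ : Env) {y x : ℕ} (α : Ty) (h : y ≠ x) :
    Env.update Γ x α y = Γ y := by simp [Env.update, h]

/-- Free variables. -/
def fv : Tm → Finset ℕ
  | .var x => {x}
  | .cunit => ∅
  | .cbool _ => ∅
  | .cint _ => ∅
  | .lam x _ M => fv M \ {x}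
  | .fix g x _ _ M => fv M \ {g, x}
  | .app M N => fv M ∪ fv N
  | .add M N => fv M ∪ fv N
  | .ifte M N N' => fv M ∪ fv N ∪ fv N'
  | .quote M => fv M
  | .letq x M N => fv M ∪ (fv N \ {x})

lemma subst_of_not_mem {x : ℕ} {N M : Tm} (h : x ∉ fv M) : subst x N M = M := by
  induction M with
  | var y =>
    simp [fv] at h
    simp [subst, Ne.symm h]
  | cunit => rfl
  | cbool b => rfl
  | cint n => rfl
  | lam y α M ih =>
    by_cases hy : y = x
    · simp [subst, hy]
    · simp [fv, Finset.mem_sdiff] at h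
      simp [subst, hy, ih (by tauto)]
  | fix g y α β M ih =>
    by_cases hg : g = x ∨ y = x
    · simp [subst, hg]
    · push_neg at hg
      simp [fv, Finset.mem_sdiff, Finset.mem_insert] at h
      simp [subst, hg.1, hg.2, ih (by tauto)]
  | app M M' ih ih' =>
    simp [fv] at h
    simp [subst, ih (by tauto), ih' (by tauto)]
  | add M M' ih ih' =>
    simp [fv] at h
    simp [subst, ih (by tauto), ih' (by tauto)]
  | ifte M N N' ih ih' ih'' =>
    simp [fv] at h
    simp [subst, ih (by tauto), ih' (by tauto), ih'' (by tauto)]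
  | quote M ih =>
    simp [fv] at h
    simp [subst, ih h]
  | letq y M M' ih ih' =>
    simp [fv, Finset.mem_sdiff] at h
    by_cases hy : y = x
    · simp [subst, hy, ih (by tauto)]
    · simp [subst, hy, ih (by tauto), ih' (by tauto)]

lemma subst_of_closed {x : ℕ} {N M : Tm} (h : fv M = ∅) : subst x N M = M :=
  subst_of_not_mem (by simp [h])

lemma mem_fv_subst {x : ℕ} {N M : Tm} :
    ∀ y ∈ fv (subst x N M), (y ∈ fv M ∧ y ≠ x) ∨ y ∈ fv N := by
  induction M with
  | var z =>
    intro y hy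
    by_cases hz : z = x
    · simp [subst, hz] at hy; tauto
    · simp [subst, hz, fv] at hy ⊢; subst hy; tauto
  | cunit => intro y hy; simp [subst, fv] at hy
  | cbool b => intro y hy; simp [subst, fv] at hy
  | cint n => intro y hy; simp [subst, fv] at hy
  | lam z α M ih =>
    intro y hy
    by_cases hz : z = x
    · simp [subst, hz, fv, Finset.mem_sdiff] at hy ⊢
      subst hz; tauto
    · simp [subst, hz, fv, Finset.mem_sdiff] at hy ⊢
      rcases ih y hy.1 with h1 | h1
      · exact Or.inl ⟨⟨h1.1, hy.2⟩, h1.2⟩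
      · tauto
  | fix g z α β M ih =>
    intro y hy
    by_cases hgz : g = x ∨ z = x
    · simp only [subst, if_pos hgz] at hy
      left
      refine ⟨hy, ?_⟩
      simp [fv, Finset.mem_sdiff, Finset.mem_insert] at hy
      rcases hgz with rfl | rfl <;> tauto
    · push_neg at hgz
      simp [subst, hgz.1, hgz.2, fv, Finset.mem_sdiff, Finset.mem_insert] at hy ⊢
      rcases ih y hy.1 with h1 | h1
      · tauto
      · tauto
  | app M M' ih ih' =>
    intro y hy
    simp [subst, fv] at hy ⊢
    rcases hy with hy | hy
    · rcases ih y hy with h1 | h1 <;> tauto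
    · rcases ih' y hy with h1 | h1 <;> tauto
  | add M M' ih ih' =>
    intro y hy
    simp [subst, fv] at hy ⊢
    rcases hy with hy | hy
    · rcases ih y hy with h1 | h1 <;> tauto
    · rcases ih' y hy with h1 | h1 <;> tauto
  | ifte M N N' ih ih' ih'' =>
    intro y hy
    simp [subst, fv] at hy ⊢
    rcases hy with hy | hy | hy
    · rcases ih y hy with h1 | h1 <;> tauto
    · rcases ih' y hy with h1 | h1 <;> tauto
    · rcases ih'' y hy with h1 | h1 <;> tauto
  | quote M ih =>
    intro y hy
    simp [subst, fv] at hy ⊢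
    rcases ih y hy with h1 | h1 <;> tauto
  | letq z M M' ih ih' =>
    intro y hy
    by_cases hz : z = x
    · simp [subst, hz, fv, Finset.mem_sdiff] at hy ⊢
      subst hz
      rcases hy with hy | hy
      · rcases ih y hy with h1 | h1 <;> tauto
      · tauto
    · simp [subst, hz, fv, Finset.mem_sdiff] at hy ⊢
      rcases hy with hy | ⟨hy, hyz⟩
      · rcases ih y hy with h1 | h1 <;> tauto
      · rcases ih' y hy with h1 | h1 <;> tauto

lemma step_fv {A B : Tm} (h : Step A B) : fv B ⊆ fv A := by
  induction h with
  | @beta x α M V hV =>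
    intro y hy
    rcases mem_fv_subst y hy with h1 | h1
    · simp [fv, Finset.mem_sdiff]; tauto
    · simp [fv]; tauto
  | @betaFix g x α β M V hV =>
    intro y hy
    rcases mem_fv_subst y hy with h1 | h1
    · rcases mem_fv_subst y h1.1 with h2 | h2
      · simp [fv, Finset.mem_sdiff, Finset.mem_insert]
        exact Or.inl ⟨h2.1, h2.2, h1.2⟩
      · simp [fv, Finset.mem_sdiff, Finset.mem_insert] at h2 ⊢
        tauto
    · simp [fv]; tauto
  | iteT => intro y hy; simp [fv]; tauto
  | iteF => intro y hy; simp [fv]; tauto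
  | addC => intro y hy; simp [fv] at hy
  | @letqQ x M N =>
    intro y hy
    rcases mem_fv_subst y hy with h1 | h1
    · simp [fv, Finset.mem_sdiff]; tauto
    · simp [fv]; tauto
  | appL h ih => intro y hy; simp [fv] at hy ⊢; tauto
  | appR hV h ih => intro y hy; simp [fv] at hy ⊢; tauto
  | addL h ih => intro y hy; simp [fv] at hy ⊢; tauto
  | addR hV h ih => intro y hy; simp [fv] at hy ⊢; tauto
  | ifteC h ih => intro y hy; simp [fv] at hy ⊢; tauto
  | letqL h ih =>
    intro y hy; simp [fv, Finset.mem_sdiff] at hy ⊢; tauto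

lemma steps_fv {A B : Tm} (h : Steps A B) : fv B ⊆ fv A := by
  induction h with
  | refl => exact subset_rfl
  | tail _ hstep ih => exact (step_fv hstep).trans ih

lemma step_fv_empty {A B : Tm} (h : Step A B) (hA : fv A = ∅) : fv B = ∅ :=
  Finset.subset_empty.mp (hA ▸ step_fv h)

lemma steps_fv_empty {A B : Tm} (h : Steps A B) (hA : fv A = ∅) : fv B = ∅ :=
  Finset.subset_empty.mp (hA ▸ steps_fv h)

lemma value_not_step {v w : Tm} (hv : IsValue v) (h : Step v w) : False := by
  cases hv <;> cases h

lemma steps_value_eq {v w : Tm} (hv : IsValue v) (h : Steps v w) : w = v := by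
  rcases h.cases_head with rfl | ⟨c, hc, _⟩
  · rfl
  · exact absurd hc (fun hh => value_not_step hv hh)

end Aux
section Aux2

lemma step_det {P A B : Tm} (h1 : Step P A) (h2 : Step P B) : A = B := by
  induction h1 generalizing B with
  | @beta x α M V hV =>
    cases h2 with
    | beta hV' => rfl
    | appL h => exact absurd h (fun h => value_not_step (IsValue.lam _ _ _) h)
    | appR hV' h => exact absurd h (fun h => value_not_step hV h)
  | @betaFix g x α β M V hV =>
    cases h2 with
    | betaFix hV' => rfl
    | appL h => exact absurd h (fun h => value_not_step (IsValue.fix _ _ _ _ _) h)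
    | appR hV' h => exact absurd h (fun h => value_not_step hV h)
  | iteT =>
    cases h2 with
    | iteT => rfl
    | ifteC h => exact absurd h (fun h => value_not_step (IsValue.cbool _) h)
  | iteF =>
    cases h2 with
    | iteF => rfl
    | ifteC h => exact absurd h (fun h => value_not_step (IsValue.cbool _) h)
  | addC =>
    cases h2 with
    | addC => rfl
    | addL h => exact absurd h (fun h => value_not_step (IsValue.cint _) h)
    | addR hV' h => exact absurd h (fun h => value_not_step (IsValue.cint _) h)
  | letqQ =>
    cases h2 with
    | letqQ => rfl
    | letqL h => exact absurd h (fun h => value_not_step (IsValue.quote _) h)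
  | appL h ih =>
    cases h2 with
    | beta hV' => exact absurd h (fun h => value_not_step (IsValue.lam _ _ _) h)
    | betaFix hV' => exact absurd h (fun h => value_not_step (IsValue.fix _ _ _ _ _) h)
    | appL h' => rw [ih h']
    | appR hV' h' => exact absurd h (fun h => value_not_step hV' h)
  | appR hV h ih =>
    cases h2 with
    | beta hV' => exact absurd h (fun h => value_not_step hV' h)
    | betaFix hV' => exact absurd h (fun h => value_not_step hV' h)
    | appL h' => exact absurd h' (fun h' => value_not_step hV h')
    | appR hV' h' => rw [ih h']
  | addL h ih =>
    cases h2 with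
    | addC => exact absurd h (fun h => value_not_step (IsValue.cint _) h)
    | addL h' => rw [ih h']
    | addR hV' h' => exact absurd h (fun h => value_not_step hV' h)
  | addR hV h ih =>
    cases h2 with
    | addC => exact absurd h (fun h => value_not_step (IsValue.cint _) h)
    | addL h' => exact absurd h' (fun h' => value_not_step hV h')
    | addR hV' h' => rw [ih h']
  | ifteC h ih =>
    cases h2 with
    | iteT => exact absurd h (fun h => value_not_step (IsValue.cbool _) h)
    | iteF => exact absurd h (fun h => value_not_step (IsValue.cbool _) h)
    | ifteC h' => rw [ih h']
  | letqL h ih =>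
    cases h2 with
    | letqQ => exact absurd h (fun h => value_not_step (IsValue.quote _) h)
    | letqL h' => rw [ih h']

/-- Weakening for typing. -/
lemma types_weaken {Γ Δ Γ' Δ' : Env} {P : Tm} {τ : Ty}
    (h : Types Γ Δ P τ)
    (hΓ : ∀ y a, Γ y = some a → Γ' y = some a)
    (hΔ : ∀ y a, Δ y = some a → Δ' y = some a) :
    Types Γ' Δ' P τ := by
  induction h generalizing Γ' Δ' with
  | varN h => exact Types.varN (hΓ _ _ h)
  | varM h => exact Types.varM (hΔ _ _ h)
  | cunit => exact Types.cunit
  | cbool => exact Types.cbool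
  | cint => exact Types.cint
  | @lam Γ Δ x α β M hM ih =>
    refine Types.lam (ih ?_ hΔ)
    intro y a hy
    by_cases hyx : y = x
    · subst hyx; simp [Env.update] at hy ⊢; exact hy
    · simp [Env.update, hyx] at hy ⊢; exact hΓ _ _ hy
  | @fix Γ Δ g x α β M hM ih =>
    refine Types.fix (ih ?_ hΔ)
    intro y a hy
    by_cases hyx : y = x
    · subst hyx; simp [Env.update] at hy ⊢; exact hy
    · by_cases hyg : y = g
      · subst hyg; simp [Env.update, hyx] at hy ⊢; exact hy
      · simp [Env.update, hyx, hyg] at hy ⊢; exact hΓ _ _ hy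
  | app hM hN ihM ihN => exact Types.app (ihM hΓ hΔ) (ihN hΓ hΔ)
  | add hM hN ihM ihN => exact Types.add (ihM hΓ hΔ) (ihN hΓ hΔ)
  | ifte hM hN hN' ihM ihN ihN' =>
    exact Types.ifte (ihM hΓ hΔ) (ihN hΓ hΔ) (ihN' hΓ hΔ)
  | quote hM ih =>
    refine Types.quote (ih ?_ hΔ)
    intro y a hy; simp [Env.empty] at hy
  | @letq Γ Δ x M N α β hM hN ihM ihN =>
    refine Types.letq (ihM hΓ hΔ) (ihN hΓ ?_)
    intro y a hy
    by_cases hyx : y = x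
    · subst hyx; simp [Env.update] at hy ⊢; exact hy
    · simp [Env.update, hyx] at hy ⊢; exact hΔ _ _ hy

lemma closed_types {P : Tm} {τ : Ty} (h : Closed P τ) (Γ Δ : Env) : Types Γ Δ P τ :=
  types_weaken h (fun y a hy => by simp [Env.empty] at hy)
    (fun y a hy => by simp [Env.empty] at hy)

lemma types_fv {Γ Δ : Env} {P : Tm} {τ : Ty} (h : Types Γ Δ P τ) :
    ∀ y ∈ fv P, Γ y ≠ none ∨ Δ y ≠ none := by
  induction h with
  | @varN Γ Δ x α h =>
    intro y hy; simp [fv] at hy; subst hy; left; simp [h]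
  | @varM Γ Δ x α h =>
    intro y hy; simp [fv] at hy; subst hy; right; simp [h]
  | cunit => intro y hy; simp [fv] at hy
  | cbool => intro y hy; simp [fv] at hy
  | cint => intro y hy; simp [fv] at hy
  | @lam Γ Δ x α β M hM ih =>
    intro y hy
    simp [fv, Finset.mem_sdiff] at hy
    rcases ih y hy.1 with h1 | h1
    · left; rwa [env_update_ne _ _ hy.2] at h1
    · right; exact h1
  | @fix Γ Δ g x α β M hM ih =>
    intro y hy
    simp [fv, Finset.mem_sdiff, Finset.mem_insert] at hy
    rcases ih y hy.1 with h1 | h1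
    · left
      rw [env_update_ne _ _ (by tauto), env_update_ne _ _ (by tauto)] at h1
      exact h1
    · right; exact h1
  | app hM hN ihM ihN =>
    intro y hy; simp [fv] at hy
    rcases hy with hy | hy
    · exact ihM y hy
    · exact ihN y hy
  | add hM hN ihM ihN =>
    intro y hy; simp [fv] at hy
    rcases hy with hy | hy
    · exact ihM y hy
    · exact ihN y hy
  | ifte hM hN hN' ihM ihN ihN' =>
    intro y hy; simp [fv] at hy
    rcases hy with hy | hy | hy
    · exact ihM y hy
    · exact ihN y hy
    · exact ihN' y hy
  | quote hM ih =>
    intro y hy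
    rcases ih y hy with h1 | h1
    · simp [Env.empty] at h1
    · right; exact h1
  | @letq Γ Δ x M N α β hM hN ihM ihN =>
    intro y hy
    simp [fv, Finset.mem_sdiff] at hy
    rcases hy with hy | ⟨hy, hyx⟩
    · exact ihM y hy
    · rcases ihN y hy with h1 | h1
      · left; exact h1
      · right; rwa [env_update_ne _ _ hyx] at h1

lemma closed_fv {P : Tm} {τ : Ty} (h : Closed P τ) : fv P = ∅ := by
  rw [Finset.eq_empty_iff_forall_notMem]
  intro y hy
  rcases types_fv h y hy with h1 | h1 <;> simp [Env.empty] at h1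

end Aux2
section Aux3

/-- Typing of a plugged context decomposes: the hole gets some type in some
environments, and any term of that type in those environments can be plugged. -/
lemma plug_typing {A : Tm} : ∀ (C : Ctx) {Γ Δ : Env} {τ : Ty},
    Types Γ Δ (C.plug A) τ →
    ∃ Γ₀ Δ₀ σ, Types Γ₀ Δ₀ A σ ∧
      ∀ B, Types Γ₀ Δ₀ B σ → Types Γ Δ (C.plug B) τ := by
  intro C
  induction C with
  | hole =>
    intro Γ Δ τ h
    exact ⟨Γ, Δ, τ, h, fun B hB => hB⟩
  | lamC x α C ih =>
    intro Γ Δ τ h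
    cases h with
    | lam hM =>
      obtain ⟨Γ₀, Δ₀, σ, hA, rb⟩ := ih hM
      exact ⟨Γ₀, Δ₀, σ, hA, fun B hB => Types.lam (rb B hB)⟩
  | fixC g x α β C ih =>
    intro Γ Δ τ h
    cases h with
    | fix hM =>
      obtain ⟨Γ₀, Δ₀, σ, hA, rb⟩ := ih hM
      exact ⟨Γ₀, Δ₀, σ, hA, fun B hB => Types.fix (rb B hB)⟩
  | appL C N ih =>
    intro Γ Δ τ h
    cases h with
    | app hM hN =>
      obtain ⟨Γ₀, Δ₀, σ, hA, rb⟩ := ih hM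
      exact ⟨Γ₀, Δ₀, σ, hA, fun B hB => Types.app (rb B hB) hN⟩
  | appR L C ih =>
    intro Γ Δ τ h
    cases h with
    | app hM hN =>
      obtain ⟨Γ₀, Δ₀, σ, hA, rb⟩ := ih hN
      exact ⟨Γ₀, Δ₀, σ, hA, fun B hB => Types.app hM (rb B hB)⟩
  | addL C N ih =>
    intro Γ Δ τ h
    cases h with
    | add hM hN =>
      obtain ⟨Γ₀, Δ₀, σ, hA, rb⟩ := ih hM
      exact ⟨Γ₀, Δ₀, σ, hA, fun B hB => Types.add (rb B hB) hN⟩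
  | addR L C ih =>
    intro Γ Δ τ h
    cases h with
    | add hM hN =>
      obtain ⟨Γ₀, Δ₀, σ, hA, rb⟩ := ih hN
      exact ⟨Γ₀, Δ₀, σ, hA, fun B hB => Types.add hM (rb B hB)⟩
  | ifteC C N N' ih =>
    intro Γ Δ τ h
    cases h with
    | ifte hM hN hN' =>
      obtain ⟨Γ₀, Δ₀, σ, hA, rb⟩ := ih hM
      exact ⟨Γ₀, Δ₀, σ, hA, fun B hB => Types.ifte (rb B hB) hN hN'⟩
  | ifteL L C N' ih =>
    intro Γ Δ τ h
    cases h with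
    | ifte hM hN hN' =>
      obtain ⟨Γ₀, Δ₀, σ, hA, rb⟩ := ih hN
      exact ⟨Γ₀, Δ₀, σ, hA, fun B hB => Types.ifte hM (rb B hB) hN'⟩
  | ifteR L N C ih =>
    intro Γ Δ τ h
    cases h with
    | ifte hM hN hN' =>
      obtain ⟨Γ₀, Δ₀, σ, hA, rb⟩ := ih hN'
      exact ⟨Γ₀, Δ₀, σ, hA, fun B hB => Types.ifte hM hN (rb B hB)⟩
  | quoteC C ih =>
    intro Γ Δ τ h
    cases h with
    | quote hM =>
      obtain ⟨Γ₀, Δ₀, σ, hA, rb⟩ := ih hM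
      exact ⟨Γ₀, Δ₀, σ, hA, fun B hB => Types.quote (rb B hB)⟩
  | letqL x C N ih =>
    intro Γ Δ τ h
    cases h with
    | letq hM hN =>
      obtain ⟨Γ₀, Δ₀, σ, hA, rb⟩ := ih hM
      exact ⟨Γ₀, Δ₀, σ, hA, fun B hB => Types.letq (rb B hB) hN⟩
  | letqR x L C ih =>
    intro Γ Δ τ h
    cases h with
    | letq hM hN =>
      obtain ⟨Γ₀, Δ₀, σ, hA, rb⟩ := ih hN
      exact ⟨Γ₀, Δ₀, σ, hA, fun B hB => Types.letq hM (rb B hB)⟩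

/-- Composition of contexts. -/
def Ctx.comp : Ctx → Ctx → Ctx
  | .hole, D => D
  | .lamC x α C, D => .lamC x α (C.comp D)
  | .fixC g x α β C, D => .fixC g x α β (C.comp D)
  | .appL C N, D => .appL (C.comp D) N
  | .appR L C, D => .appR L (C.comp D)
  | .addL C N, D => .addL (C.comp D) N
  | .addR L C, D => .addR L (C.comp D)
  | .ifteC C N N', D => .ifteC (C.comp D) N N'
  | .ifteL L C N', D => .ifteL L (C.comp D) N'
  | .ifteR L N C, D => .ifteR L N (C.comp D)
  | .quoteC C, D => .quoteC (C.comp D)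
  | .letqL x C N, D => .letqL x (C.comp D) N
  | .letqR x L C, D => .letqR x L (C.comp D)

lemma comp_plug (C D : Ctx) (X : Tm) :
    (C.comp D).plug X = C.plug (D.plug X) := by
  induction C <;> simp [Ctx.comp, Ctx.plug, *]

/-- A diverging term of an arbitrary type, typeable in every environment. -/
def Omega (σ : Ty) : Tm :=
  .app (.fix 0 1 .unit σ (.app (.var 0) (.var 1))) .cunit

lemma omega_types (Γ Δ : Env) (σ : Ty) : Types Γ Δ (Omega σ) σ := by
  refine Types.app (α := .unit) (Types.fix (Types.app (α := .unit)
    (Types.varN (α := Ty.arrow .unit σ) ?_) (Types.varN ?_))) Types.cunit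
  · simp [Env.update]
  · simp [Env.update]

lemma omega_fv (σ : Ty) : fv (Omega σ) = ∅ := by
  simp [Omega, fv]

end Aux3
section Aux4

open Relation

/-- Lifted multi-step congruence rules. -/
lemma steps_appL {A B N : Tm} (h : Steps A B) : Steps (.app A N) (.app B N) :=
  ReflTransGen.lift (fun t => Tm.app t N) (fun _ _ hs => Step.appL hs) _ _ h

lemma steps_appR {v A B : Tm} (hv : IsValue v) (h : Steps A B) :
    Steps (.app v A) (.app v B) :=
  ReflTransGen.lift (fun t => Tm.app v t) (fun _ _ hs => Step.appR hv hs) _ _ h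

lemma steps_addL {A B N : Tm} (h : Steps A B) : Steps (.add A N) (.add B N) :=
  ReflTransGen.lift (fun t => Tm.add t N) (fun _ _ hs => Step.addL hs) _ _ h

lemma steps_addR {v A B : Tm} (hv : IsValue v) (h : Steps A B) :
    Steps (.add v A) (.add v B) :=
  ReflTransGen.lift (fun t => Tm.add v t) (fun _ _ hs => Step.addR hv hs) _ _ h

lemma steps_ifteC {A B N N' : Tm} (h : Steps A B) :
    Steps (.ifte A N N') (.ifte B N N') :=
  ReflTransGen.lift (fun t => Tm.ifte t N N') (fun _ _ hs => Step.ifteC hs) _ _ h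

lemma steps_letqL {x : ℕ} {A B N : Tm} (h : Steps A B) :
    Steps (.letq x A N) (.letq x B N) :=
  ReflTransGen.lift (fun t => Tm.letq x t N) (fun _ _ hs => Step.letqL hs) _ _ h

/-- A reduction-closed congruent relation on terms: congruence closure of
pairs related (in either direction) by reduction of closed terms. -/
inductive Rl : Tm → Tm → Prop
  | fwd {X Y} : Steps X Y → fv X = ∅ → Rl X Y
  | bwd {X Y} : Steps Y X → fv Y = ∅ → Rl X Y
  | var (x) : Rl (.var x) (.var x)
  | cunit : Rl .cunit .cunit
  | cbool (b) : Rl (.cbool b) (.cbool b)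
  | cint (n) : Rl (.cint n) (.cint n)
  | lam (x α) {M N} : Rl M N → Rl (.lam x α M) (.lam x α N)
  | fixp (g x α β) {M N} : Rl M N → Rl (.fix g x α β M) (.fix g x α β N)
  | app {M N M' N'} : Rl M M' → Rl N N' → Rl (.app M N) (.app M' N')
  | add {M N M' N'} : Rl M M' → Rl N N' → Rl (.add M N) (.add M' N')
  | ifte {M N K M' N' K'} : Rl M M' → Rl N N' → Rl K K' →
      Rl (.ifte M N K) (.ifte M' N' K')
  | quote {M N} : Rl M N → Rl (.quote M) (.quote N)
  | letq (x) {M N M' N'} : Rl M M' → Rl N N' → Rl (.letq x M N) (.letq x M' N')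

lemma rl_refl : ∀ P : Tm, Rl P P := by
  intro P
  induction P with
  | var x => exact Rl.var x
  | cunit => exact Rl.cunit
  | cbool b => exact Rl.cbool b
  | cint n => exact Rl.cint n
  | lam x α M ih => exact Rl.lam x α ih
  | fix g x α β M ih => exact Rl.fixp g x α β ih
  | app M N ih ih' => exact Rl.app ih ih'
  | add M N ih ih' => exact Rl.add ih ih'
  | ifte M N N' ih ih' ih'' => exact Rl.ifte ih ih' ih''
  | quote M ih => exact Rl.quote ih
  | letq x M N ih ih' => exact Rl.letq x ih ih'

lemma rl_plug (C : Ctx) {A B : Tm} (h : Rl A B) : Rl (C.plug A) (C.plug B) := by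
  induction C with
  | hole => exact h
  | lamC x α C ih => exact Rl.lam x α ih
  | fixC g x α β C ih => exact Rl.fixp g x α β ih
  | appL C N ih => exact Rl.app ih (rl_refl N)
  | appR L C ih => exact Rl.app (rl_refl L) ih
  | addL C N ih => exact Rl.add ih (rl_refl N)
  | addR L C ih => exact Rl.add (rl_refl L) ih
  | ifteC C N N' ih => exact Rl.ifte ih (rl_refl N) (rl_refl N')
  | ifteL L C N' ih => exact Rl.ifte (rl_refl L) ih (rl_refl N')
  | ifteR L N C ih => exact Rl.ifte (rl_refl L) (rl_refl N) ih
  | quoteC C ih => exact Rl.quote ih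
  | letqL x C N ih => exact Rl.letq x ih (rl_refl N)
  | letqR x L C ih => exact Rl.letq x (rl_refl L) ih

lemma rl_subst {P Q : Tm} (h : Rl P Q) :
    ∀ (x : ℕ) {A B : Tm}, Rl A B → fv A = ∅ → fv B = ∅ →
      Rl (subst x A P) (subst x B Q) := by
  induction h with
  | @fwd X Y hs hX =>
    intro x A B hAB hA hB
    rw [subst_of_closed hX, subst_of_closed (steps_fv_empty hs hX)]
    exact Rl.fwd hs hX
  | @bwd X Y hs hY =>
    intro x A B hAB hA hB
    rw [subst_of_closed (steps_fv_empty hs hY), subst_of_closed hY]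
    exact Rl.bwd hs hY
  | var y =>
    intro x A B hAB hA hB
    by_cases hy : y = x
    · simp [subst, hy]; exact hAB
    · simp [subst, hy]; exact Rl.var y
  | cunit => intro x A B hAB hA hB; simpa [subst] using Rl.cunit
  | cbool b => intro x A B hAB hA hB; simpa [subst] using Rl.cbool b
  | cint n => intro x A B hAB hA hB; simpa [subst] using Rl.cint n
  | lam y α hMN ih =>
    intro x A B hAB hA hB
    by_cases hy : y = x
    · simpa [subst, hy] using Rl.lam y α hMN
    · simpa [subst, hy] using Rl.lam y α (ih x hAB hA hB)
  | fixp g y α β hMN ih =>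
    intro x A B hAB hA hB
    by_cases hgy : g = x ∨ y = x
    · simpa [subst, hgy] using Rl.fixp g y α β hMN
    · simpa [subst, hgy] using Rl.fixp g y α β (ih x hAB hA hB)
  | app hM hN ihM ihN =>
    intro x A B hAB hA hB
    simpa [subst] using Rl.app (ihM x hAB hA hB) (ihN x hAB hA hB)
  | add hM hN ihM ihN =>
    intro x A B hAB hA hB
    simpa [subst] using Rl.add (ihM x hAB hA hB) (ihN x hAB hA hB)
  | ifte hM hN hK ihM ihN ihK =>
    intro x A B hAB hA hB
    simpa [subst] using
      Rl.ifte (ihM x hAB hA hB) (ihN x hAB hA hB) (ihK x hAB hA hB)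
  | quote hM ih =>
    intro x A B hAB hA hB
    simpa [subst] using Rl.quote (ih x hAB hA hB)
  | letq y hM hN ihM ihN =>
    intro x A B hAB hA hB
    by_cases hy : y = x
    · simpa [subst, hy] using Rl.letq y (ihM x hAB hA hB) hN
    · simpa [subst, hy] using Rl.letq y (ihM x hAB hA hB) (ihN x hAB hA hB)

/-- A term related to a value evaluates to a related value. -/
lemma rl_val {P Q : Tm} (h : Rl P Q) (hv : IsValue P) :
    ∃ Q', Steps Q Q' ∧ IsValue Q' ∧ Rl P Q' := by
  cases h with
  | fwd hs hX =>
    rcases steps_value_eq hv hs with rfl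
    exact ⟨_, ReflTransGen.refl, hv, rl_refl _⟩
  | bwd hs hY => exact ⟨_, hs, hv, rl_refl _⟩
  | var x => exact absurd hv (by rintro ⟨⟩)
  | cunit => exact ⟨_, ReflTransGen.refl, IsValue.cunit, Rl.cunit⟩
  | cbool b => exact ⟨_, ReflTransGen.refl, IsValue.cbool b, Rl.cbool b⟩
  | cint n => exact ⟨_, ReflTransGen.refl, IsValue.cint n, Rl.cint n⟩
  | lam x α hMN => exact ⟨_, ReflTransGen.refl, IsValue.lam _ _ _, Rl.lam x α hMN⟩
  | fixp g x α β hMN =>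
    exact ⟨_, ReflTransGen.refl, IsValue.fix _ _ _ _ _, Rl.fixp g x α β hMN⟩
  | app hM hN => exact absurd hv (by rintro ⟨⟩)
  | add hM hN => exact absurd hv (by rintro ⟨⟩)
  | ifte hM hN hK => exact absurd hv (by rintro ⟨⟩)
  | quote hM => exact ⟨_, ReflTransGen.refl, IsValue.quote _, Rl.quote hM⟩
  | letq x hM hN => exact absurd hv (by rintro ⟨⟩)

lemma rl_lam_inv {x α M Q} (h : Rl (.lam x α M) Q) (hv : IsValue Q) :
    ∃ M₂, Q = .lam x α M₂ ∧ Rl M M₂ := by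
  cases h with
  | fwd hs hX =>
    rcases steps_value_eq (IsValue.lam x α M) hs with rfl
    exact ⟨M, rfl, rl_refl M⟩
  | bwd hs hY =>
    rcases steps_value_eq hv hs with rfl
    exact ⟨M, rfl, rl_refl M⟩
  | lam _ _ hMN => exact ⟨_, rfl, hMN⟩

lemma rl_fix_inv {g x α β M Q} (h : Rl (.fix g x α β M) Q) (hv : IsValue Q) :
    ∃ M₂, Q = .fix g x α β M₂ ∧ Rl M M₂ := by
  cases h with
  | fwd hs hX =>
    rcases steps_value_eq (IsValue.fix g x α β M) hs with rfl
    exact ⟨M, rfl, rl_refl M⟩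
  | bwd hs hY =>
    rcases steps_value_eq hv hs with rfl
    exact ⟨M, rfl, rl_refl M⟩
  | fixp _ _ _ _ hMN => exact ⟨_, rfl, hMN⟩

lemma rl_quote_inv {M Q} (h : Rl (.quote M) Q) (hv : IsValue Q) :
    ∃ M₂, Q = .quote M₂ ∧ Rl M M₂ := by
  cases h with
  | fwd hs hX =>
    rcases steps_value_eq (IsValue.quote M) hs with rfl
    exact ⟨M, rfl, rl_refl M⟩
  | bwd hs hY =>
    rcases steps_value_eq hv hs with rfl
    exact ⟨M, rfl, rl_refl M⟩
  | quote hMN => exact ⟨_, rfl, hMN⟩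

lemma rl_cbool_inv {b Q} (h : Rl (.cbool b) Q) (hv : IsValue Q) :
    Q = .cbool b := by
  cases h with
  | fwd hs hX => exact steps_value_eq (IsValue.cbool b) hs
  | bwd hs hY => exact (steps_value_eq hv hs).symm
  | cbool _ => rfl

lemma rl_cint_inv {n Q} (h : Rl (.cint n) Q) (hv : IsValue Q) :
    Q = .cint n := by
  cases h with
  | fwd hs hX => exact steps_value_eq (IsValue.cint n) hs
  | bwd hs hY => exact (steps_value_eq hv hs).symm
  | cint _ => rfl

end Aux4
section Aux5

open Relation

lemma rl_fwd_sim {P Q P' : Tm} (hs : Steps P Q) (hfv : fv P = ∅)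
    (hstep : Step P P') : ∃ Q', Steps Q Q' ∧ Rl P' Q' := by
  rcases hs.cases_head with rfl | ⟨c, hc, hrest⟩
  · exact ⟨P', ReflTransGen.single hstep, rl_refl P'⟩
  · rcases step_det hstep hc with rfl
    exact ⟨Q, ReflTransGen.refl, Rl.fwd hrest (step_fv_empty hstep hfv)⟩

lemma rl_bwd_sim {P Q P' : Tm} (hs : Steps Q P) (hstep : Step P P') :
    ∃ Q', Steps Q Q' ∧ Rl P' Q' :=
  ⟨P', hs.tail hstep, rl_refl P'⟩

/-- Simulation: a step on the left is matched by steps on the right. -/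
lemma rl_sim {P P' : Tm} (hstep : Step P P') :
    ∀ {Q}, Rl P Q → fv P = ∅ → fv Q = ∅ → ∃ Q', Steps Q Q' ∧ Rl P' Q' := by
  induction hstep with
  | @beta x α M V hV =>
    intro Q hrl hP hQ
    cases hrl with
    | fwd hs hX => exact rl_fwd_sim hs hX (Step.beta hV)
    | bwd hs hY => exact rl_bwd_sim hs (Step.beta hV)
    | app h1 h2 =>
      simp only [fv, Finset.union_eq_empty] at hP hQ
      obtain ⟨q1, hq1s, hq1v, hq1r⟩ := rl_val h1 (IsValue.lam x α M)
      obtain ⟨M₂, rfl, hM₂⟩ := rl_lam_inv hq1r hq1v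
      obtain ⟨q2, hq2s, hq2v, hq2r⟩ := rl_val h2 hV
      refine ⟨subst x q2 M₂, ?_, ?_⟩
      · exact (steps_appL hq1s).trans
          ((steps_appR (IsValue.lam _ _ _) hq2s).trans
            (ReflTransGen.single (Step.beta hq2v)))
      · exact rl_subst hM₂ x hq2r hP.2 (steps_fv_empty hq2s hQ.2)
  | @betaFix g x α β M V hV =>
    intro Q hrl hP hQ
    cases hrl with
    | fwd hs hX => exact rl_fwd_sim hs hX (Step.betaFix hV)
    | bwd hs hY => exact rl_bwd_sim hs (Step.betaFix hV)
    | app h1 h2 =>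
      simp only [fv, Finset.union_eq_empty] at hP hQ
      obtain ⟨q1, hq1s, hq1v, hq1r⟩ := rl_val h1 (IsValue.fix g x α β M)
      obtain ⟨M₂, rfl, hM₂⟩ := rl_fix_inv hq1r hq1v
      obtain ⟨q2, hq2s, hq2v, hq2r⟩ := rl_val h2 hV
      have hfix1 : fv (Tm.fix g x α β M) = ∅ := hP.1
      have hfix2 : fv (Tm.fix g x α β M₂) = ∅ := steps_fv_empty hq1s hQ.1
      refine ⟨subst x q2 (subst g (.fix g x α β M₂) M₂), ?_, ?_⟩
      · exact (steps_appL hq1s).trans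
          ((steps_appR (IsValue.fix _ _ _ _ _) hq2s).trans
            (ReflTransGen.single (Step.betaFix hq2v)))
      · exact rl_subst (rl_subst hM₂ g (Rl.fixp g x α β hM₂) hfix1 hfix2) x
          hq2r hP.2 (steps_fv_empty hq2s hQ.2)
  | @iteT N N' =>
    intro Q hrl hP hQ
    cases hrl with
    | fwd hs hX => exact rl_fwd_sim hs hX Step.iteT
    | bwd hs hY => exact rl_bwd_sim hs Step.iteT
    | ifte h1 h2 h3 =>
      obtain ⟨qc, hqcs, hqcv, hqcr⟩ := rl_val h1 (IsValue.cbool true)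
      rcases rl_cbool_inv hqcr hqcv with rfl
      exact ⟨_, (steps_ifteC hqcs).trans (ReflTransGen.single Step.iteT), h2⟩
  | @iteF N N' =>
    intro Q hrl hP hQ
    cases hrl with
    | fwd hs hX => exact rl_fwd_sim hs hX Step.iteF
    | bwd hs hY => exact rl_bwd_sim hs Step.iteF
    | ifte h1 h2 h3 =>
      obtain ⟨qc, hqcs, hqcv, hqcr⟩ := rl_val h1 (IsValue.cbool false)
      rcases rl_cbool_inv hqcr hqcv with rfl
      exact ⟨_, (steps_ifteC hqcs).trans (ReflTransGen.single Step.iteF), h3⟩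
  | @addC m n =>
    intro Q hrl hP hQ
    cases hrl with
    | fwd hs hX => exact rl_fwd_sim hs hX Step.addC
    | bwd hs hY => exact rl_bwd_sim hs Step.addC
    | add h1 h2 =>
      obtain ⟨qa, hqas, hqav, hqar⟩ := rl_val h1 (IsValue.cint m)
      rcases rl_cint_inv hqar hqav with rfl
      obtain ⟨qb, hqbs, hqbv, hqbr⟩ := rl_val h2 (IsValue.cint n)
      rcases rl_cint_inv hqbr hqbv with rfl
      exact ⟨_, (steps_addL hqas).trans
        ((steps_addR (IsValue.cint m) hqbs).trans
          (ReflTransGen.single Step.addC)), rl_refl _⟩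
  | @letqQ x A N =>
    intro Q hrl hP hQ
    cases hrl with
    | fwd hs hX => exact rl_fwd_sim hs hX Step.letqQ
    | bwd hs hY => exact rl_bwd_sim hs Step.letqQ
    | letq _ h1 h2 =>
      rename_i Qs Qb
      simp only [fv, Finset.union_eq_empty] at hP hQ
      obtain ⟨qs, hqss, hqsv, hqsr⟩ := rl_val h1 (IsValue.quote A)
      obtain ⟨A₂, rfl, hA₂⟩ := rl_quote_inv hqsr hqsv
      refine ⟨subst x A₂ Qb, ?_, ?_⟩
      · exact (steps_letqL hqss).trans (ReflTransGen.single Step.letqQ)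
      · have hfvA₂ : fv A₂ = ∅ := by
          have h' := steps_fv_empty hqss hQ.1
          simpa [fv] using h'
        exact rl_subst h2 x hA₂ hP.1 hfvA₂
  | @appL M M₀ N hstep' ih =>
    intro Q hrl hP hQ
    cases hrl with
    | fwd hs hX => exact rl_fwd_sim hs hX (Step.appL hstep')
    | bwd hs hY => exact rl_bwd_sim hs (Step.appL hstep')
    | app h1 h2 =>
      simp only [fv, Finset.union_eq_empty] at hP hQ
      obtain ⟨Q₁', s, r⟩ := ih h1 hP.1 hQ.1
      exact ⟨_, steps_appL s, Rl.app r h2⟩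
  | @appR v N N' hv hstep' ih =>
    intro Q hrl hP hQ
    cases hrl with
    | fwd hs hX => exact rl_fwd_sim hs hX (Step.appR hv hstep')
    | bwd hs hY => exact rl_bwd_sim hs (Step.appR hv hstep')
    | app h1 h2 =>
      simp only [fv, Finset.union_eq_empty] at hP hQ
      obtain ⟨q1, hq1s, hq1v, hq1r⟩ := rl_val h1 hv
      obtain ⟨Q₂', s, r⟩ := ih h2 hP.2 hQ.2
      exact ⟨_, (steps_appL hq1s).trans (steps_appR hq1v s), Rl.app hq1r r⟩
  | @addL M M₀ N hstep' ih =>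
    intro Q hrl hP hQ
    cases hrl with
    | fwd hs hX => exact rl_fwd_sim hs hX (Step.addL hstep')
    | bwd hs hY => exact rl_bwd_sim hs (Step.addL hstep')
    | add h1 h2 =>
      simp only [fv, Finset.union_eq_empty] at hP hQ
      obtain ⟨Q₁', s, r⟩ := ih h1 hP.1 hQ.1
      exact ⟨_, steps_addL s, Rl.add r h2⟩
  | @addR v N N' hv hstep' ih =>
    intro Q hrl hP hQ
    cases hrl with
    | fwd hs hX => exact rl_fwd_sim hs hX (Step.addR hv hstep')
    | bwd hs hY => exact rl_bwd_sim hs (Step.addR hv hstep')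
    | add h1 h2 =>
      simp only [fv, Finset.union_eq_empty] at hP hQ
      obtain ⟨q1, hq1s, hq1v, hq1r⟩ := rl_val h1 hv
      obtain ⟨Q₂', s, r⟩ := ih h2 hP.2 hQ.2
      exact ⟨_, (steps_addL hq1s).trans (steps_addR hq1v s), Rl.add hq1r r⟩
  | @ifteC M M₀ N N' hstep' ih =>
    intro Q hrl hP hQ
    cases hrl with
    | fwd hs hX => exact rl_fwd_sim hs hX (Step.ifteC hstep')
    | bwd hs hY => exact rl_bwd_sim hs (Step.ifteC hstep')
    | ifte h1 h2 h3 =>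
      simp only [fv, Finset.union_eq_empty] at hP hQ
      obtain ⟨Q₁', s, r⟩ := ih h1 hP.1.1 hQ.1.1
      exact ⟨_, steps_ifteC s, Rl.ifte r h2 h3⟩
  | @letqL x M M₀ N hstep' ih =>
    intro Q hrl hP hQ
    cases hrl with
    | fwd hs hX => exact rl_fwd_sim hs hX (Step.letqL hstep')
    | bwd hs hY => exact rl_bwd_sim hs (Step.letqL hstep')
    | letq _ h1 h2 =>
      simp only [fv, Finset.union_eq_empty] at hP hQ
      obtain ⟨Q₁', s, r⟩ := ih h1 hP.1 hQ.1
      exact ⟨_, steps_letqL s, Rl.letq x r h2⟩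

lemma rl_conv_aux : ∀ {P v : Tm}, Steps P v → IsValue v →
    ∀ {Q}, Rl P Q → fv P = ∅ → fv Q = ∅ → Conv Q := by
  intro P v hs
  induction hs using Relation.ReflTransGen.head_induction_on with
  | refl =>
    intro hv Q h _ _
    obtain ⟨Q', hs', hv', _⟩ := rl_val h hv
    exact ⟨Q', hs', hv'⟩
  | head hab hbv ih =>
    intro hv Q h hfvP hfvQ
    obtain ⟨Q₁, h₁, hrl⟩ := rl_sim hab h hfvP hfvQ
    obtain ⟨u, hu, huv⟩ := ih hv hrl (step_fv_empty hab hfvP) (steps_fv_empty h₁ hfvQ)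
    exact ⟨u, h₁.trans hu, huv⟩

/-- Transfer of convergence along `Rl`. -/
lemma rl_conv {P Q : Tm} (h : Rl P Q) (h1 : fv P = ∅) (h2 : fv Q = ∅)
    (hc : Conv P) : Conv Q := by
  obtain ⟨v, hs, hv⟩ := hc
  exact rl_conv_aux hs hv h h1 h2

end Aux5
section Aux6

open Relation

/-- The coercion gadget: a context which behaves as the identity but whose plugs
receive the type `σ` (of the quoted dummy) in any environments, via a shadowed
modal variable. -/
def Kctx (σ α : Ty) : Ctx :=
  .letqR 0 (.quote (Omega σ))
    (.letqL 1 (.quoteC .hole) (.app (.lam 0 α (.var 0)) (.var 1)))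

lemma Kctx_plug (σ α : Ty) (X : Tm) :
    (Kctx σ α).plug X =
      .letq 0 (.quote (Omega σ))
        (.letq 1 (.quote X) (.app (.lam 0 α (.var 0)) (.var 1))) := rfl

lemma K_types {X : Tm} {α : Ty} (σ : Ty) (Γ₀ Δ₀ : Env) (hX : Closed X α) :
    Types Γ₀ Δ₀ ((Kctx σ α).plug X) σ := by
  rw [Kctx_plug]
  refine Types.letq (Types.quote (omega_types _ _ _)) ?_
  refine Types.letq (Types.quote (closed_types hX _ _)) ?_
  refine Types.app (α := α) (Types.lam (Types.varM ?_)) (Types.varM ?_)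
  · simp [Env.update]
  · simp [Env.update]

lemma K_steps {X u : Tm} {σ α : Ty} (hfvX : fv X = ∅) (hXu : Steps X u)
    (hu : IsValue u) : Steps ((Kctx σ α).plug X) u := by
  have s1 : Step ((Kctx σ α).plug X)
      (.letq 1 (.quote X) (.app (.lam 0 α (.var 0)) (.var 1))) := by
    rw [Kctx_plug]
    have hh := Step.letqQ (x := 0) (M := Omega σ)
      (N := .letq 1 (.quote X) (.app (.lam 0 α (.var 0)) (.var 1)))
    simpa [subst, subst_of_closed hfvX] using hh
  have s2 : Step (.letq 1 (.quote X) (.app (.lam 0 α (.var 0)) (.var 1)))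
      (.app (.lam 0 α (.var 0)) X) := by
    have hh := Step.letqQ (x := 1) (M := X)
      (N := .app (.lam 0 α (.var 0)) (.var 1))
    simpa [subst] using hh
  have s3 : Steps (.app (.lam 0 α (.var 0)) X) (.app (.lam 0 α (.var 0)) u) :=
    steps_appR (IsValue.lam _ _ _) hXu
  have s4 : Step (.app (.lam 0 α (.var 0)) u) u := by
    have hh := Step.beta (x := 0) (α := α) (M := .var 0) hu
    simpa [subst] using hh
  exact ReflTransGen.head s1 (ReflTransGen.head s2 (s3.tail s4))

lemma K_fv {X : Tm} {σ α : Ty} (hfvX : fv X = ∅) :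
    fv ((Kctx σ α).plug X) = ∅ := by
  rw [Kctx_plug]
  simp [fv, omega_fv, hfvX]

lemma evals_arg : ∀ {T v : Tm}, Steps T v → IsValue v →
    ∀ {α : Ty} {N : Tm}, T = .app (.lam 0 α .cunit) N → ∃ u, Evals N u := by
  intro T v hs
  induction hs using Relation.ReflTransGen.head_induction_on with
  | refl => intro hv α N hT; subst hT; cases hv
  | head hab hbv ih =>
    intro hv α N hT
    subst hT
    cases hab with
    | beta hV => exact ⟨N, ReflTransGen.refl, hV⟩
    | appL hstep => exact absurd hstep (fun hh => value_not_step (IsValue.lam _ _ _) hh)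
    | appR hV hstep =>
      obtain ⟨u, hu1, hu2⟩ := ih hv rfl
      exact ⟨u, ReflTransGen.head hstep hu1, hu2⟩

end Aux6
/-- if `M` is closed and `M ≃ V` for a (closed) value `V`, then
`M ⇓ W` for some value `W` with `V ≃ W`. -/
theorem closed_cong_value_evals (M V : Tm) (α : Ty)
    (hM : Closed M α) (hV : IsValue V) (hVc : Closed V α)
    (h : Cong M V) :
    ∃ W, Evals M W ∧ Cong V W := by
  classical
  have hfvM : fv M = ∅ := closed_fv hM
  have hfvV : fv V = ∅ := closed_fv hVc
  -- Step 1: `M` evaluates to some value `W`.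
  have hC0V : Closed ((Ctx.appR (.lam 0 α .cunit) Ctx.hole).plug V) .unit :=
    Types.app (α := α) (Types.lam Types.cunit) hVc
  have hC0M : Closed ((Ctx.appR (.lam 0 α .cunit) Ctx.hole).plug M) .unit :=
    Types.app (α := α) (Types.lam Types.cunit) hM
  have hconv0V : Conv ((Ctx.appR (.lam 0 α .cunit) Ctx.hole).plug V) := by
    refine ⟨.cunit, Relation.ReflTransGen.single ?_, IsValue.cunit⟩
    have hb := Step.beta (x := 0) (α := α) (M := .cunit) hV
    simpa [subst, Ctx.plug] using hb
  have hconv0M := h.2 _ hC0V hC0M hconv0V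
  obtain ⟨W, hWs, hWv⟩ : ∃ u, Evals M u := by
    obtain ⟨v, hs, hv⟩ := hconv0M
    exact evals_arg hs hv rfl
  have hfvW : fv W = ∅ := steps_fv_empty hWs hfvM
  refine ⟨W, ⟨hWs, hWv⟩, ?_, ?_⟩
  · -- Prec V W
    intro C hCV hCW hconv
    obtain ⟨Γ₀, Δ₀, σ, hVσ, repl⟩ := plug_typing C hCV
    have hKM : Closed (C.plug ((Kctx σ α).plug M)) .unit := repl _ (K_types σ Γ₀ Δ₀ hM)
    have hKV : Closed (C.plug ((Kctx σ α).plug V)) .unit := repl _ (K_types σ Γ₀ Δ₀ hVc)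
    have sKV : Steps ((Kctx σ α).plug V) V :=
      K_steps hfvV Relation.ReflTransGen.refl hV
    have sKM : Steps ((Kctx σ α).plug M) W := K_steps hfvM hWs hWv
    have c1 : Conv (C.plug ((Kctx σ α).plug V)) :=
      rl_conv (rl_plug C (Rl.bwd sKV (K_fv hfvV))) (closed_fv hCV) (closed_fv hKV) hconv
    have c2 : Conv (C.plug ((Kctx σ α).plug M)) := by
      have hh := h.2 (C.comp (Kctx σ α))
      simp only [comp_plug] at hh
      exact hh hKV hKM c1
    exact rl_conv (rl_plug C (Rl.fwd sKM (K_fv hfvM))) (closed_fv hKM) (closed_fv hCW) c2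
  · -- Prec W V
    intro C hCW hCV hconv
    obtain ⟨Γ₀, Δ₀, σ, hVσ, repl⟩ := plug_typing C hCV
    have hKM : Closed (C.plug ((Kctx σ α).plug M)) .unit := repl _ (K_types σ Γ₀ Δ₀ hM)
    have hKV : Closed (C.plug ((Kctx σ α).plug V)) .unit := repl _ (K_types σ Γ₀ Δ₀ hVc)
    have sKV : Steps ((Kctx σ α).plug V) V :=
      K_steps hfvV Relation.ReflTransGen.refl hV
    have sKM : Steps ((Kctx σ α).plug M) W := K_steps hfvM hWs hWv
    have c1 : Conv (C.plug ((Kctx σ α).plug M)) :=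
      rl_conv (rl_plug C (Rl.bwd sKM (K_fv hfvM))) (closed_fv hCW) (closed_fv hKM) hconv
    have c2 : Conv (C.plug ((Kctx σ α).plug V)) := by
      have hh := h.1 (C.comp (Kctx σ α))
      simp only [comp_plug] at hh
      exact hh hKM hKV c1
    exact rl_conv (rl_plug C (Rl.fwd sKV (K_fv hfvV))) (closed_fv hKV) (closed_fv hCV) c2

end PCFdp
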